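/- Let ℓ ≥ 0 be an integer, set ρ_j = ℓ/2 + 1 − j for j = 1,…,ℓ+1, and let s ∈ ℂ and x, y ∈ ℝ^{ℓ+1}. Then the Gaussian integral over the ℓ(ℓ+1)/2 variables n_{ij} (indexed by pairs 1 ≤ j < i ≤ ℓ+1) satisfies: 2^{ℓ+1} · exp( Σ_{1≤i<j≤ℓ+1}(y_i − y_j) + (is + ℓ/2)·Σ_{j=1}^{ℓ+1}(y_j − x_j) − π Σ_{j=1}^{ℓ+1} e^{2(y_j−x_j)} ) · ∫_{ℝ^{ℓ(ℓ+1)/2}} exp( 2πi Σ_{k=1}^{ℓ} n_{k+1,k} − π Σ_{1≤j<i≤ℓ+1} n_{ij}² e^{2(y_j − x_i)} ) Π dn_{ij} = 2^{ℓ+1} exp( Σ_{j=1}^{ℓ+1}(is + ρ_j)(y_j − x_j) − π Σ_{k=1}^{ℓ}( e^{2(y_k−x_k)} + e^{2(x_{k+1}−y_k)} ) − π e^{2(y_{ℓ+1}−x_{ℓ+1})} ). In particular the integral on the left converges absolutely. -/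

import Mathlib

open MeasureTheory Finset

/-- Index set of the lower-triangular entries `n_{ij}`, `1 ≤ j < i ≤ ℓ+1`:
pairs `(i,j)` with `j < i`. -/
abbrev LowerIdx (ℓ : ℕ) := {p : Fin (ℓ+1) × Fin (ℓ+1) // p.2 < p.1}

/-- The subdiagonal index `(k+1, k)`. -/
def subdiag (ℓ : ℕ) (k : Fin ℓ) : LowerIdx ℓ := ⟨(k.succ, k.castSucc), Fin.castSucc_lt_succ⟩

lemma sum_subdiag {ℓ : ℕ} {M : Type*} [AddCommMonoid M] (g : LowerIdx ℓ → M) :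
    (∑ p : LowerIdx ℓ, if (p.1.1 : ℕ) = (p.1.2 : ℕ) + 1 then g p else 0)
      = ∑ k : Fin ℓ, g (subdiag ℓ k) := by
  classical
  rw [← Finset.sum_filter]
  refine Finset.sum_bij' (i := fun p hp => (⟨(p.1.2 : ℕ), by
      have h1 : ((p.1.1 : Fin (ℓ+1)) : ℕ) = ((p.1.2 : Fin (ℓ+1)) : ℕ) + 1 :=
        (Finset.mem_filter.mp hp).2
      have h2 := p.1.1.isLt
      omega⟩ : Fin ℓ)) (j := fun k _ => subdiag ℓ k) ?_ ?_ ?_ ?_ ?_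
  · intro p hp; exact Finset.mem_univ _
  · intro k hk
    simp only [Finset.mem_filter, Finset.mem_univ, true_and, subdiag, Fin.val_succ,
      Fin.coe_castSucc]
  · intro p hp
    have h1 : ((p.1.1 : Fin (ℓ+1)) : ℕ) = ((p.1.2 : Fin (ℓ+1)) : ℕ) + 1 :=
      (Finset.mem_filter.mp hp).2
    apply Subtype.ext; apply Prod.ext <;> apply Fin.ext <;>
      simp [subdiag, Fin.val_succ, h1]
  · intro k hk; simp [subdiag]
  · intro p hp
    have h1 : ((p.1.1 : Fin (ℓ+1)) : ℕ) = ((p.1.2 : Fin (ℓ+1)) : ℕ) + 1 :=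
      (Finset.mem_filter.mp hp).2
    congr 1
    apply Subtype.ext; apply Prod.ext <;> apply Fin.ext <;>
      simp [subdiag, Fin.val_succ, h1]

lemma sum_lowerIdx {ℓ : ℕ} {M : Type*} [AddCommMonoid M] (F : Fin (ℓ+1) → Fin (ℓ+1) → M) :
    (∑ p : LowerIdx ℓ, F p.1.1 p.1.2) = ∑ i : Fin (ℓ+1), ∑ j ∈ Iio i, F i j := by
  classical
  rw [← Finset.sum_subtype (univ.filter (fun p : Fin (ℓ+1) × Fin (ℓ+1) => p.2 < p.1))
    (fun q => by simp) (fun q => F q.1 q.2)]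
  rw [Finset.sum_filter, ← Finset.univ_product_univ, Finset.sum_product]
  refine Finset.sum_congr rfl fun i _ => ?_
  rw [← Finset.sum_filter]
  congr 1
  ext j; simp

lemma gauss1 (r cc : ℝ) :
    (∫ t : ℝ, Complex.exp (-((Real.pi:ℂ) * (Real.exp r : ℂ)) * (t:ℂ)^2
        + (2*(Real.pi:ℂ)*Complex.I*(cc:ℂ)) * t))
      = Complex.exp (((-r/2 : ℝ) : ℂ)
          - (Real.pi:ℂ) * (cc:ℂ)^2 * (Real.exp (-r) : ℂ)) := by
  have hpi : (Real.pi:ℂ) ≠ 0 := by exact_mod_cast Real.pi_ne_zero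
  have he : ((Real.exp r : ℝ):ℂ) ≠ 0 := by exact_mod_cast (Real.exp_pos r).ne'
  have hb : (-((Real.pi:ℂ) * (Real.exp r : ℂ))).re < 0 := by
    rw [show -((Real.pi:ℂ) * (Real.exp r:ℂ)) = ((-(Real.pi * Real.exp r) : ℝ):ℂ) by
      push_cast [-Complex.ofReal_exp]; ring, Complex.ofReal_re]
    nlinarith [Real.pi_pos, Real.exp_pos r]
  have key := integral_cexp_quadratic hb (2*(Real.pi:ℂ)*Complex.I*(cc:ℂ)) 0
  simp only [add_zero, zero_sub] at key
  rw [key]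
  have h1 : ((Real.pi:ℂ) / -(-((Real.pi:ℂ) * (Real.exp r : ℂ)))) = ((Real.exp (-r) : ℝ) : ℂ) := by
    rw [neg_neg, Real.exp_neg, Complex.ofReal_inv]
    rw [eq_comm, inv_eq_iff_eq_inv, eq_comm, inv_div]
    rw [mul_comm, mul_div_assoc, div_self hpi, mul_one]
  have h2 : ((Real.exp (-r) : ℝ) : ℂ) ^ (1/2 : ℂ) = ((Real.exp (-r/2) : ℝ) : ℂ) := by
    rw [show (1/2 : ℂ) = (((1:ℝ)/2 : ℝ) : ℂ) by norm_num,
      ← Complex.ofReal_cpow (Real.exp_nonneg _), ← Real.exp_mul]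
    exact congrArg _ (by rw [Real.exp_eq_exp]; ring)
  have hsq : (2*(Real.pi:ℂ)*Complex.I*(cc:ℂ))^2 = -(4*(Real.pi:ℂ)^2*(cc:ℂ)^2) := by
    have hI : Complex.I^2 = -1 := Complex.I_sq
    linear_combination (4*(Real.pi:ℂ)^2*(cc:ℂ)^2) * hI
  have h3 : -((2*(Real.pi:ℂ)*Complex.I*(cc:ℂ))^2 / (4 * -((Real.pi:ℂ) * (Real.exp r : ℂ))))
      = - ((Real.pi:ℂ) * (cc:ℂ)^2 * (Real.exp (-r) : ℂ)) := by
    rw [hsq, Real.exp_neg, Complex.ofReal_inv]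
    field_simp
  rw [h1, h2, h3, Complex.ofReal_exp, ← Complex.exp_add]
  rw [← sub_eq_add_neg]

/-- The one-variable factor of the Gaussian integrand. -/
noncomputable def fKer (ℓ : ℕ) (x y : Fin (ℓ+1) → ℝ) (p : LowerIdx ℓ) (t : ℝ) : ℂ :=
  Complex.exp (-((Real.pi:ℂ) * (Real.exp (2 * (y p.1.2 - x p.1.1)) : ℂ)) * (t:ℂ)^2
    + (2*(Real.pi:ℂ)*Complex.I*(((if (p.1.1 : ℕ) = (p.1.2 : ℕ) + 1 then (1:ℝ) else 0) : ℝ):ℂ)) * t)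

lemma fKer_integrable (ℓ : ℕ) (x y : Fin (ℓ+1) → ℝ) (p : LowerIdx ℓ) :
    Integrable (fKer ℓ x y p) := by
  have hb : (-((Real.pi:ℂ) * (Real.exp (2 * (y p.1.2 - x p.1.1)) : ℂ))).re < 0 := by
    rw [show -((Real.pi:ℂ) * (Real.exp (2 * (y p.1.2 - x p.1.1)):ℂ))
        = ((-(Real.pi * Real.exp (2 * (y p.1.2 - x p.1.1))) : ℝ):ℂ) by
      push_cast [-Complex.ofReal_exp]; ring, Complex.ofReal_re]
    nlinarith [Real.pi_pos, Real.exp_pos (2 * (y p.1.2 - x p.1.1))]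
  have := integrable_cexp_quadratic' hb
    (2*(Real.pi:ℂ)*Complex.I*(((if (p.1.1 : ℕ) = (p.1.2 : ℕ) + 1 then (1:ℝ) else 0) : ℝ):ℂ)) 0
  unfold fKer
  simpa using this

lemma fKer_integral (ℓ : ℕ) (x y : Fin (ℓ+1) → ℝ) (p : LowerIdx ℓ) :
    (∫ t : ℝ, fKer ℓ x y p t)
      = Complex.exp (((x p.1.1 - y p.1.2 : ℝ):ℂ)
          - (Real.pi:ℂ) * (((if (p.1.1 : ℕ) = (p.1.2 : ℕ) + 1 then (1:ℝ) else 0) : ℝ):ℂ)^2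
            * ((Real.exp (2 * (x p.1.1 - y p.1.2)) : ℝ):ℂ)) := by
  have h := gauss1 (2 * (y p.1.2 - x p.1.1))
    ((if (p.1.1 : ℕ) = (p.1.2 : ℕ) + 1 then (1:ℝ) else 0))
  rw [show (-(2 * (y p.1.2 - x p.1.1))/2 : ℝ) = x p.1.1 - y p.1.2 by ring,
    show (-(2 * (y p.1.2 - x p.1.1)) : ℝ) = 2 * (x p.1.1 - y p.1.2) by ring] at h
  unfold fKer
  exact h

theorem baxter_kernel_gaussian_integral (ℓ : ℕ) (s : ℂ) (x y : Fin (ℓ+1) → ℝ) :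
    Integrable (fun n : LowerIdx ℓ → ℝ =>
      Complex.exp (2 * Real.pi * Complex.I *
          (∑ k : Fin ℓ, (n ⟨(k.succ, k.castSucc), (Fin.castSucc_lt_succ : k.castSucc < k.succ)⟩ : ℂ))
        - (Real.pi : ℂ) * ∑ p : LowerIdx ℓ,
            (n p : ℂ)^2 * Real.exp (2 * (y p.1.2 - x p.1.1)))) ∧
    (2 : ℂ) ^ (ℓ+1) *
      Complex.exp ((∑ i : Fin (ℓ+1), ∑ j ∈ Ioi i, ((y i - y j : ℝ) : ℂ))
        + (Complex.I * s + (ℓ : ℂ)/2) * (∑ j : Fin (ℓ+1), ((y j - x j : ℝ) : ℂ))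
        - (Real.pi : ℂ) * ∑ j : Fin (ℓ+1), (Real.exp (2 * (y j - x j)) : ℂ)) *
      (∫ n : LowerIdx ℓ → ℝ,
        Complex.exp (2 * Real.pi * Complex.I *
            (∑ k : Fin ℓ, (n ⟨(k.succ, k.castSucc), (Fin.castSucc_lt_succ : k.castSucc < k.succ)⟩ : ℂ))
          - (Real.pi : ℂ) * ∑ p : LowerIdx ℓ,
              (n p : ℂ)^2 * Real.exp (2 * (y p.1.2 - x p.1.1))))
    = (2 : ℂ) ^ (ℓ+1) *
      Complex.exp ((∑ j : Fin (ℓ+1),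
          (Complex.I * s + ((ℓ : ℂ)/2 + 1 - ((j : ℕ) + 1))) * ((y j - x j : ℝ) : ℂ))
        - (Real.pi : ℂ) * ∑ k : Fin ℓ,
            ((Real.exp (2 * (y k.castSucc - x k.castSucc)) : ℂ)
              + (Real.exp (2 * (x k.succ - y k.castSucc)) : ℂ))
        - (Real.pi : ℂ) * (Real.exp (2 * (y (Fin.last ℓ) - x (Fin.last ℓ))) : ℂ)) := by
  classical
  have hG : (fun n : LowerIdx ℓ → ℝ =>
      Complex.exp (2 * Real.pi * Complex.I *
          (∑ k : Fin ℓ, (n ⟨(k.succ, k.castSucc), (Fin.castSucc_lt_succ : k.castSucc < k.succ)⟩ : ℂ))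
        - (Real.pi : ℂ) * ∑ p : LowerIdx ℓ,
            (n p : ℂ)^2 * Real.exp (2 * (y p.1.2 - x p.1.1))))
      = fun n => ∏ p : LowerIdx ℓ, fKer ℓ x y p (n p) := by
    funext n
    simp only [fKer]
    rw [← Complex.exp_sum]
    congr 1
    rw [Finset.sum_add_distrib]
    have h1 : ∑ p : LowerIdx ℓ,
        -((Real.pi:ℂ) * (Real.exp (2 * (y p.1.2 - x p.1.1)) : ℂ)) * ((n p : ℝ):ℂ)^2
        = -((Real.pi:ℂ) * ∑ p : LowerIdx ℓ,
            ((n p : ℝ):ℂ)^2 * (Real.exp (2 * (y p.1.2 - x p.1.1)) : ℂ)) := by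
      rw [Finset.mul_sum, ← Finset.sum_neg_distrib]
      exact Finset.sum_congr rfl fun p _ => by ring
    have h2 : ∑ p : LowerIdx ℓ,
        (2*(Real.pi:ℂ)*Complex.I*(((if (p.1.1 : ℕ) = (p.1.2 : ℕ) + 1 then (1:ℝ) else 0) : ℝ):ℂ))
          * ((n p : ℝ):ℂ)
        = 2*(Real.pi:ℂ)*Complex.I * ∑ k : Fin ℓ, ((n (subdiag ℓ k) : ℝ):ℂ) := by
      rw [Finset.mul_sum,
        ← sum_subdiag (M := ℂ) (fun p => 2*(Real.pi:ℂ)*Complex.I * ((n p : ℝ):ℂ))]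
      refine Finset.sum_congr rfl fun p _ => ?_
      by_cases h : (p.1.1 : ℕ) = (p.1.2 : ℕ) + 1 <;> simp [h]
    rw [h1, h2]
    have h3 : (∑ k : Fin ℓ, (n ⟨(k.succ, k.castSucc), (Fin.castSucc_lt_succ : k.castSucc < k.succ)⟩ : ℂ))
        = ∑ k : Fin ℓ, ((n (subdiag ℓ k) : ℝ):ℂ) := rfl
    rw [h3]
    ring
  have hprod : Integrable (fun n : LowerIdx ℓ → ℝ => ∏ p : LowerIdx ℓ, fKer ℓ x y p (n p)) :=
    Integrable.fintype_prod (fun p => fKer_integrable ℓ x y p)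
  refine ⟨by rw [hG]; exact hprod, ?_⟩
  rw [hG, integral_fintype_prod_volume_eq_prod (fKer ℓ x y)]
  have hval : (∏ p : LowerIdx ℓ, ∫ t : ℝ, fKer ℓ x y p t)
      = Complex.exp ((∑ i : Fin (ℓ+1), ∑ j ∈ Iio i, ((x i - y j : ℝ):ℂ))
          - (Real.pi:ℂ) * ∑ k : Fin ℓ, ((Real.exp (2 * (x k.succ - y k.castSucc)) : ℝ):ℂ)) := by
    rw [Finset.prod_congr rfl (fun p _ => fKer_integral ℓ x y p), ← Complex.exp_sum]
    congr 1
    rw [Finset.sum_sub_distrib]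
    congr 1
    · exact sum_lowerIdx (fun i j => ((x i - y j : ℝ):ℂ))
    · rw [show (∑ p : LowerIdx ℓ,
          (Real.pi:ℂ) * (((if (p.1.1 : ℕ) = (p.1.2 : ℕ) + 1 then (1:ℝ) else 0) : ℝ):ℂ)^2
            * ((Real.exp (2 * (x p.1.1 - y p.1.2)) : ℝ):ℂ))
          = ∑ p : LowerIdx ℓ, (if (p.1.1 : ℕ) = (p.1.2 : ℕ) + 1 then
              (Real.pi:ℂ) * ((Real.exp (2 * (x p.1.1 - y p.1.2)) : ℝ):ℂ) else 0) from
          Finset.sum_congr rfl fun p _ => by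
            by_cases h : (p.1.1 : ℕ) = (p.1.2 : ℕ) + 1 <;> simp [h],
        sum_subdiag (M := ℂ)
          (fun p => (Real.pi:ℂ) * ((Real.exp (2 * (x p.1.1 - y p.1.2)) : ℝ):ℂ)),
        Finset.mul_sum]
      rfl
  rw [hval, mul_assoc, ← Complex.exp_add]
  congr 2
  -- exponent identity
  have hE : (∑ j : Fin (ℓ+1), ((Real.exp (2 * (y j - x j)) : ℝ):ℂ))
      = (∑ k : Fin ℓ, ((Real.exp (2 * (y k.castSucc - x k.castSucc)) : ℝ):ℂ))
        + ((Real.exp (2 * (y (Fin.last ℓ) - x (Fin.last ℓ))) : ℝ):ℂ) :=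
    Fin.sum_univ_castSucc _
  have hswap : (∑ i : Fin (ℓ+1), ∑ j ∈ Ioi i, ((y i - y j : ℝ):ℂ))
      = ∑ i : Fin (ℓ+1), ∑ j ∈ Iio i, ((y j - y i : ℝ):ℂ) :=
    Finset.sum_comm' (by intro a b; simp [Finset.mem_Ioi, Finset.mem_Iio])
  have hcomb : (∑ i : Fin (ℓ+1), ∑ j ∈ Iio i, ((y j - y i : ℝ):ℂ))
      + (∑ i : Fin (ℓ+1), ∑ j ∈ Iio i, ((x i - y j : ℝ):ℂ))
      = ∑ i : Fin (ℓ+1), ((i : ℕ):ℂ) * ((x i - y i : ℝ):ℂ) := by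
    rw [← Finset.sum_add_distrib]
    refine Finset.sum_congr rfl fun i _ => ?_
    rw [← Finset.sum_add_distrib,
      show (∑ j ∈ Iio i, (((y j - y i : ℝ):ℂ) + ((x i - y j : ℝ):ℂ)))
        = ∑ _j ∈ Iio i, ((x i - y i : ℝ):ℂ) from
        Finset.sum_congr rfl fun j _ => by push_cast; ring,
      Finset.sum_const, Fin.card_Iio, nsmul_eq_mul]
  have hlin : (Complex.I * s + (ℓ : ℂ)/2) * (∑ j : Fin (ℓ+1), ((y j - x j : ℝ):ℂ))
      + (∑ i : Fin (ℓ+1), ((i : ℕ):ℂ) * ((x i - y i : ℝ):ℂ))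
      = ∑ j : Fin (ℓ+1),
          (Complex.I * s + ((ℓ : ℂ)/2 + 1 - ((j : ℕ) + 1))) * ((y j - x j : ℝ):ℂ) := by
    rw [Finset.mul_sum, ← Finset.sum_add_distrib]
    refine Finset.sum_congr rfl fun j _ => ?_
    push_cast [-Complex.ofReal_exp]
    ring
  rw [hswap, hE, Finset.sum_add_distrib]
  linear_combination hcomb + hlin
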